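/- Let C be a category with products indexed by A*, let A be an alphabet and L : O_A → C a C-language. Define the C-automaton 𝒜_fin by: 𝒜_fin(center) = the product of copies of L(right) indexed by words u ∈ A*; 𝒜_fin(◁) : 𝒜_fin(center) → L(right) is the projection at the empty word ε; 𝒜_fin(a) : 𝒜_fin(center) → 𝒜_fin(center) is the morphism whose u-indexed component is the projection at au; and 𝒜_fin(▷) : L(left) → 𝒜_fin(center) is the morphism whose u-indexed component is L(▷u◁). Then 𝒜_fin accepts L and is a final object of Auto(L). -/

import Mathlib

open CategoryTheory CategoryTheory.Limits

universe v u

/-! ### The input category `I_A` of word automata -/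

inductive WObj (A : Type) : Type where
  | left | center | right

inductive WEdge {A : Type} : WObj A → WObj A → Type where
  | tri : WEdge WObj.left WObj.center
  | letter (a : A) : WEdge WObj.center WObj.center
  | tril : WEdge WObj.center WObj.right

instance (A : Type) : Quiver (WObj A) := ⟨WEdge⟩

/-- `I_A`: the free category on the graph `left -▷→ center -a→ center -◁→ right`. -/
def IA (A : Type) : Type := Paths (WObj A)

instance (A : Type) : Category (IA A) :=
  inferInstanceAs (Category (Paths (WObj A)))

def IA.l (A : Type) : IA A := WObj.left
def IA.c (A : Type) : IA A := WObj.center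
def IA.r (A : Type) : IA A := WObj.right

/-- The generating morphism `▷ : left ⟶ center`. -/
def IA.tri (A : Type) : IA.l A ⟶ IA.c A := Quiver.Hom.toPath WEdge.tri
/-- The generating morphism `a : center ⟶ center` for a letter `a`. -/
def IA.letter {A : Type} (a : A) : IA.c A ⟶ IA.c A := Quiver.Hom.toPath (WEdge.letter a)
/-- The generating morphism `◁ : center ⟶ right`. -/
def IA.tril (A : Type) : IA.c A ⟶ IA.r A := Quiver.Hom.toPath WEdge.tril

/-- The word spelled by a path in the graph (the sequence of `letter` edges used). -/
def toWord {A : Type} : ∀ {X Y : WObj A}, Quiver.Path X Y → List A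
  | _, _, Quiver.Path.nil => []
  | _, _, Quiver.Path.cons p e =>
      toWord p ++ (match e with
        | WEdge.letter a => [a]
        | _ => [])

/-- The path `center → center` spelling a word `w`. -/
def pathCC {A : Type} : List A → ((IA.c A) ⟶ (IA.c A))
  | [] => Quiver.Path.nil
  | a :: w => (Quiver.Hom.toPath (WEdge.letter a)).comp (pathCC w)

/-- The path `▷ w ◁ : left ⟶ right` spelling a word `w`. -/
def pathLR {A : Type} (w : List A) : (IA.l A) ⟶ (IA.r A) :=
  IA.tri A ≫ pathCC w ≫ IA.tril A

theorem path_from_right {A : Type} : ∀ {Z : WObj A},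
    Quiver.Path (WObj.right : WObj A) Z → Z = WObj.right
  | _, Quiver.Path.nil => rfl
  | _, Quiver.Path.cons p e => by
      have h := path_from_right p
      subst h
      exact nomatch e

theorem path_ll_nil {A : Type} (p : Quiver.Path (WObj.left : WObj A) WObj.left) :
    p = Quiver.Path.nil := by
  cases p with
  | nil => rfl
  | cons q e => exact nomatch e

theorem path_rr_nil {A : Type} (p : Quiver.Path (WObj.right : WObj A) WObj.right) :
    p = Quiver.Path.nil := by
  cases p with
  | nil => rfl
  | cons q e =>
      have h := path_from_right q
      subst h
      exact nomatch e

theorem path_rl_false {A : Type} (p : Quiver.Path (WObj.right : WObj A) WObj.left) :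
    False := by
  have := path_from_right p
  exact nomatch this

/-- `O_A`: the full subcategory of `I_A` on the objects `left` and `right`. -/
def OA (A : Type) : Type := ObjectProperty.FullSubcategory (fun X : IA A => X ≠ IA.c A)

instance (A : Type) : Category (OA A) :=
  inferInstanceAs (Category (ObjectProperty.FullSubcategory (fun X : IA A => X ≠ IA.c A)))

/-- The inclusion functor `ι : O_A ⥤ I_A`. -/
def OA.inc (A : Type) : OA A ⥤ IA A := ObjectProperty.ι _

def OA.l (A : Type) : OA A := ⟨IA.l A, fun h => nomatch h⟩
def OA.r (A : Type) : OA A := ⟨IA.r A, fun h => nomatch h⟩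

/-- The morphism `▷ w ◁ : left ⟶ right` of `O_A`. -/
def OA.word {A : Type} (w : List A) : OA.l A ⟶ OA.r A := ObjectProperty.homMk (pathLR w)

/-- The language `O_A ⥤ C` determined by two objects `LI`, `LO` of `C` and a function
assigning to every word `w ∈ A*` a morphism `LI ⟶ LO` (the value at `▷w◁`). -/
def mkLang {A : Type} {C : Type u} [Category.{v} C] (LI LO : C)
    (f : List A → (LI ⟶ LO)) : OA A ⥤ C where
  obj X :=
    match X with
    | ⟨WObj.left, _⟩ => LI
    | ⟨WObj.right, _⟩ => LO
    | ⟨WObj.center, h⟩ => absurd rfl h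
  map {X Y} p :=
    match X, Y, p with
    | ⟨WObj.left, _⟩, ⟨WObj.left, _⟩, _ => 𝟙 LI
    | ⟨WObj.left, _⟩, ⟨WObj.right, _⟩, p => f (toWord p.hom)
    | ⟨WObj.right, _⟩, ⟨WObj.right, _⟩, _ => 𝟙 LO
    | ⟨WObj.right, _⟩, ⟨WObj.left, _⟩, p => (path_rl_false p.hom).elim
    | ⟨WObj.center, h⟩, _, _ => absurd rfl h
    | _, ⟨WObj.center, h⟩, _ => absurd rfl h
  map_id X := by
    rcases X with ⟨(_|_|_), hX⟩
    · rfl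
    · exact absurd rfl hX
    · rfl
  map_comp {X Y Z} p q := by
    rcases X with ⟨(_|_|_), hX⟩ <;> rcases Y with ⟨(_|_|_), hY⟩ <;>
      rcases Z with ⟨(_|_|_), hZ⟩ <;>
      first
        | exact absurd rfl hX
        | exact absurd rfl hY
        | exact absurd rfl hZ
        | exact (path_rl_false p.hom).elim
        | exact (path_rl_false q.hom).elim
        | exact (Category.id_comp _).symm
        | (show f (toWord (Quiver.Path.comp p.hom q.hom)) = 𝟙 LI ≫ f (toWord q.hom)
           rw [path_ll_nil p.hom]
           exact (congrArg (fun w => f (toWord w)) (Quiver.Path.nil_comp q.hom)).trans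
             (Category.id_comp _).symm)
        | (show f (toWord (Quiver.Path.comp p.hom q.hom)) = f (toWord p.hom) ≫ 𝟙 LO
           rw [path_rr_nil q.hom]
           exact (Category.comp_id _).symm)

/-- A `C`-automaton `M` accepts the `C`-language `L` when `ι ⋙ M = L`. -/
def Accepts {A : Type} {C : Type u} [Category.{v} C] (M : IA A ⥤ C) (L : OA A ⥤ C) : Prop :=
  OA.inc A ⋙ M = L

/-- The category `Auto(L)` of `C`-automata accepting the language `L`; morphisms are
natural transformations whose whiskering along `ι` is the identity of `L`. -/
def Auto (A : Type) {C : Type u} [Category.{v} C] (L : OA A ⥤ C) : Type _ :=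
  { M : IA A ⥤ C // Accepts M L }

instance (A : Type) {C : Type u} [Category.{v} C] (L : OA A ⥤ C) :
    Category (Auto A L) where
  Hom M N := { α : M.1 ⟶ N.1 //
    CategoryTheory.Functor.whiskerLeft (OA.inc A) α = eqToHom (M.2.trans N.2.symm) }
  id M := ⟨𝟙 M.1, by simp⟩
  comp {M N P} f g := ⟨f.1 ≫ g.1, by
    rw [CategoryTheory.Functor.whiskerLeft_comp, f.2, g.2, eqToHom_trans]⟩
  id_comp f := Subtype.ext (Category.id_comp _)
  comp_id f := Subtype.ext (Category.comp_id _)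
  assoc f g h := Subtype.ext (Category.assoc _ _ _)

/-- The functor `St : Auto(L) ⥤ C` evaluating an automaton at the object `center`. -/
def St (A : Type) {C : Type u} [Category.{v} C] (L : OA A ⥤ C) : Auto A L ⥤ C where
  obj M := M.1.obj (IA.c A)
  map f := f.1.app (IA.c A)
  map_id _ := rfl
  map_comp _ _ := rfl

/-- The underlying natural transformation of a morphism in `Auto(L)`. -/
def Auto.nat {A : Type} {C : Type u} [Category.{v} C] {L : OA A ⥤ C} {M N : Auto A L}
    (α : M ⟶ N) : M.1 ⟶ N.1 :=
  (show { β : M.1 ⟶ N.1 //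
      CategoryTheory.Functor.whiskerLeft (OA.inc A) β = eqToHom (M.2.trans N.2.symm) } from α).1

/-- Constructor for objects of `Auto(L)`. -/
def Auto.mk {A : Type} {C : Type u} [Category.{v} C] {L : OA A ⥤ C}
    (M : IA A ⥤ C) (h : Accepts M L) : Auto A L := ⟨M, h⟩

variable {A : Type} {C : Type u} [Category.{v} C]

/-- The final automaton for a language `L : O_A ⥤ C`, defined on the generating graph:
its state object is the `A*`-indexed power of `L(right)`, `◁` is the projection at the
empty word, a letter `a` acts with `u`-indexed component the projection at `a·u`, and `▷`
has `u`-indexed component `L(▷u◁)`. -/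
noncomputable def AfinPre [HasLimitsOfShape (Discrete (List A)) C] (L : OA A ⥤ C) :
    WObj A ⥤q C where
  obj X :=
    match X with
    | WObj.left => L.obj (OA.l A)
    | WObj.center => ∏ᶜ (fun _ : List A => L.obj (OA.r A))
    | WObj.right => L.obj (OA.r A)
  map e :=
    match e with
    | WEdge.tri => Pi.lift (fun u : List A => L.map (OA.word u))
    | WEdge.letter a =>
        Pi.lift (fun u : List A => Pi.π (fun _ : List A => L.obj (OA.r A)) (a :: u))
    | WEdge.tril => Pi.π (fun _ : List A => L.obj (OA.r A)) ([] : List A)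

/-- The automaton `𝒜_fin`, i.e. the above data regarded as a functor `I_A ⥤ C`. -/
noncomputable def Afin [HasLimitsOfShape (Discrete (List A)) C] (L : OA A ⥤ C) :
    IA A ⥤ C :=
  Paths.lift (AfinPre L)

/-! ### Auxiliary lemmas -/

theorem pathCC_snoc (w : List A) (a : A) :
    pathCC (w ++ [a]) = Quiver.Path.cons (pathCC w) (WEdge.letter a) := by
  induction w with
  | nil => rfl
  | cons b w ih =>
      show (Quiver.Hom.toPath (WEdge.letter b)).comp (pathCC (w ++ [a])) = _
      rw [ih]
      rfl

theorem toWord_cons_tri (q : Quiver.Path (WObj.left : WObj A) WObj.left) :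
    toWord (Quiver.Path.cons q WEdge.tri) = toWord q ++ [] := by
  simp [toWord]

theorem toWord_cons_letter {X : WObj A} (q : Quiver.Path X WObj.center) (a : A) :
    toWord (Quiver.Path.cons q (WEdge.letter a)) = toWord q ++ [a] := by
  simp [toWord]

theorem toWord_nil' {X : WObj A} : toWord (Quiver.Path.nil : Quiver.Path X X) = [] := by
  simp [toWord]

theorem toWord_cons_tril {X : WObj A} (q : Quiver.Path X WObj.center) :
    toWord (Quiver.Path.cons q WEdge.tril) = toWord q ++ [] := by
  simp [toWord]

theorem path_l_gen : ∀ {Z : WObj A} (p : Quiver.Path (WObj.left : WObj A) Z),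
    (match Z, p with
     | WObj.left, p => p = Quiver.Path.nil
     | WObj.center, p => p = (Quiver.Hom.toPath WEdge.tri).comp (pathCC (toWord p))
     | WObj.right, p => p = pathLR (toWord p)) := by
  intro Z p
  induction p with
  | nil => rfl
  | cons q e ih =>
      change WEdge _ _ at e
      cases e with
      | tri =>
          have hq : q = Quiver.Path.nil := ih
          subst hq
          show Quiver.Path.cons Quiver.Path.nil WEdge.tri =
            (Quiver.Hom.toPath WEdge.tri).comp
              (pathCC (toWord (Quiver.Path.cons Quiver.Path.nil WEdge.tri)))
          rw [toWord_cons_tri, toWord_nil']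
          rfl
      | letter a =>
          have hq : q = (Quiver.Hom.toPath WEdge.tri).comp (pathCC (toWord q)) := ih
          show Quiver.Path.cons q (WEdge.letter a) =
            (Quiver.Hom.toPath WEdge.tri).comp
              (pathCC (toWord (Quiver.Path.cons q (WEdge.letter a))))
          rw [toWord_cons_letter, pathCC_snoc]
          conv_lhs => rw [hq]
          rfl
      | tril =>
          have hq : q = (Quiver.Hom.toPath WEdge.tri).comp (pathCC (toWord q)) := ih
          show Quiver.Path.cons q WEdge.tril =
            pathLR (toWord (Quiver.Path.cons q WEdge.tril))
          rw [toWord_cons_tril, List.append_nil]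
          conv_lhs => rw [hq]
          rfl

theorem path_lc (p : Quiver.Path (WObj.left : WObj A) WObj.center) :
    p = (Quiver.Hom.toPath WEdge.tri).comp (pathCC (toWord p)) :=
  path_l_gen p

theorem path_lr (p : Quiver.Path (WObj.left : WObj A) WObj.right) :
    p = pathLR (toWord p) :=
  path_l_gen p

/-- `pathCC u ≫ ◁` as a cons. -/
theorem pathCC_tril (u : List A) :
    (pathCC u ≫ IA.tril A : (IA.c A) ⟶ (IA.r A)) =
      Quiver.Path.cons (pathCC u) WEdge.tril := rfl

theorem Afin_map_pathCC_tril [HasLimitsOfShape (Discrete (List A)) C] (L : OA A ⥤ C)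
    (u : List A) :
    (Afin L).map (pathCC u ≫ IA.tril A) =
      Pi.π (fun _ : List A => L.obj (OA.r A)) u := by
  induction u with
  | nil =>
      show (Paths.lift (AfinPre L)).map (Quiver.Path.cons Quiver.Path.nil WEdge.tril) = _
      rw [Paths.lift_cons, Paths.lift_nil]
      show 𝟙 ((AfinPre L).obj WObj.center) ≫ (AfinPre L).map WEdge.tril =
        Pi.π (fun _ : List A => L.obj (OA.r A)) ([] : List A)
      rw [Category.id_comp]
      rfl
  | cons a w ih =>
      have h : (pathCC (a :: w) ≫ IA.tril A : (IA.c A) ⟶ (IA.r A)) =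
          IA.letter a ≫ (pathCC w ≫ IA.tril A) := by
        show ((Quiver.Hom.toPath (WEdge.letter a)).comp (pathCC w)).comp _ = _
        erw [Quiver.Path.comp_assoc]
        rfl
      rw [h, CategoryTheory.Functor.map_comp, ih]
      show (Paths.lift (AfinPre L)).map (Quiver.Hom.toPath (WEdge.letter a)) ≫ _ = _
      rw [Paths.lift_toPath]
      show Pi.lift (fun u : List A => Pi.π (fun _ : List A => L.obj (OA.r A)) (a :: u)) ≫
        Pi.π _ w = _
      simp

theorem Afin_map_pathLR [HasLimitsOfShape (Discrete (List A)) C] (L : OA A ⥤ C)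
    (w : List A) :
    (Afin L).map (pathLR w) = L.map (OA.word w) := by
  have h : (pathLR w : (IA.l A) ⟶ (IA.r A)) = IA.tri A ≫ (pathCC w ≫ IA.tril A) := rfl
  rw [h, CategoryTheory.Functor.map_comp, Afin_map_pathCC_tril]
  show (Paths.lift (AfinPre L)).map (Quiver.Hom.toPath WEdge.tri) ≫ _ = _
  rw [Paths.lift_toPath]
  show Pi.lift (fun u : List A => L.map (OA.word u)) ≫ Pi.π _ w = _
  simp

/-- Naturality on all paths follows from naturality on the generating edges. -/
theorem nat_of_edges {F G : IA A ⥤ C} (app : ∀ X : IA A, F.obj X ⟶ G.obj X)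
    (h : ∀ {X Y : WObj A} (e : WEdge X Y),
      F.map (Quiver.Hom.toPath e) ≫ app Y = app X ≫ G.map (Quiver.Hom.toPath e)) :
    ∀ {X Y : IA A} (p : X ⟶ Y), F.map p ≫ app Y = app X ≫ G.map p := by
  intro X Y p
  change @Quiver.Path (WObj A) _ X Y at p
  induction p with
  | nil =>
      show F.map (𝟙 X) ≫ app X = app X ≫ G.map (𝟙 X)
      rw [CategoryTheory.Functor.map_id, CategoryTheory.Functor.map_id,
        Category.id_comp, Category.comp_id]
  | @cons Y Z q e ih =>
      have hF : F.map (Quiver.Path.cons q e) =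
          F.map q ≫ F.map (Quiver.Hom.toPath e) := F.map_comp q (Quiver.Hom.toPath e)
      have hG : G.map (Quiver.Path.cons q e) =
          G.map q ≫ G.map (Quiver.Hom.toPath e) := G.map_comp q (Quiver.Hom.toPath e)
      erw [hF, hG, Category.assoc, h e, ← Category.assoc, ih, Category.assoc]

theorem Afin_accepts [HasLimitsOfShape (Discrete (List A)) C] (L : OA A ⥤ C) :
    Accepts (Afin L) L := by
  apply CategoryTheory.Functor.ext
  case h_obj =>
    rintro ⟨(_ | _ | _), hX⟩
    · rfl
    · exact absurd rfl hX
    · rfl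
  case h_map =>
    rintro ⟨(_ | _ | _), hX⟩ ⟨(_ | _ | _), hY⟩ ⟨p⟩
    · -- left ⟶ left
      have hp := path_ll_nil p
      subst hp
      show (Afin L).map (𝟙 (IA.l A)) =
        𝟙 ((Afin L).obj (IA.l A)) ≫ L.map (𝟙 (OA.l A)) ≫ 𝟙 (L.obj (OA.l A))
      rw [CategoryTheory.Functor.map_id, CategoryTheory.Functor.map_id]
      simp only [Category.id_comp, Category.comp_id]
      exact (Category.comp_id _).symm
    · exact absurd rfl hY
    · -- left ⟶ right
      show (Afin L).map p =
        𝟙 (L.obj ⟨WObj.left, hX⟩) ≫ L.map ⟨p⟩ ≫ 𝟙 (L.obj ⟨WObj.right, hY⟩)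
      rw [Category.id_comp, Category.comp_id]
      conv_lhs => rw [path_lr p]
      erw [Afin_map_pathLR]
      exact congrArg (fun q : IA.l A ⟶ IA.r A => L.map (ObjectProperty.homMk q : OA.l A ⟶ OA.r A))
        (path_lr p).symm
    · exact absurd rfl hX
    · exact absurd rfl hX
    · exact absurd rfl hX
    · exact (path_rl_false p).elim
    · exact absurd rfl hY
    · -- right ⟶ right
      have hp := path_rr_nil p
      subst hp
      show (Afin L).map (𝟙 (IA.r A)) =
        𝟙 ((Afin L).obj (IA.r A)) ≫ L.map (𝟙 (OA.r A)) ≫ 𝟙 (L.obj (OA.r A))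
      rw [CategoryTheory.Functor.map_id, CategoryTheory.Functor.map_id]
      simp only [Category.id_comp, Category.comp_id]
      exact (Category.comp_id _).symm

section Terminal

variable [HasLimitsOfShape (Discrete (List A)) C] (L : OA A ⥤ C)

variable (M : Auto A L)

/-- The object equality at `left` coming from acceptance. -/
theorem acc_l : M.1.obj (IA.l A) = L.obj (OA.l A) := Functor.congr_obj M.2 (OA.l A)

/-- The object equality at `right` coming from acceptance. -/
theorem acc_r : M.1.obj (IA.r A) = L.obj (OA.r A) := Functor.congr_obj M.2 (OA.r A)

theorem acc_hom (w : List A) :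
    M.1.map (pathLR w) = eqToHom (acc_l L M) ≫ L.map (OA.word w) ≫
      eqToHom (acc_r L M).symm :=
  Functor.congr_hom M.2 (OA.word w)

/-- The components of the canonical morphism to the final automaton. -/
noncomputable def toAfinApp : ∀ X : WObj A, M.1.obj X ⟶ (Afin L).obj X
  | WObj.left => eqToHom (acc_l L M)
  | WObj.center => Pi.lift (fun u : List A =>
      M.1.map (pathCC u ≫ IA.tril A) ≫ eqToHom (acc_r L M))
  | WObj.right => eqToHom (acc_r L M)

theorem toAfin_edge : ∀ {X Y : WObj A} (e : WEdge X Y),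
    M.1.map (Quiver.Hom.toPath e) ≫ toAfinApp L M Y =
      toAfinApp L M X ≫ (Afin L).map (Quiver.Hom.toPath e) := by
  intro X Y e
  cases e with
  | tri =>
      show M.1.map (IA.tri A) ≫ Pi.lift _ = eqToHom (acc_l L M) ≫ (Afin L).map (IA.tri A)
      have h2 : (Afin L).map (IA.tri A) = Pi.lift (fun u : List A => L.map (OA.word u)) := by
        show (Paths.lift (AfinPre L)).map (Quiver.Hom.toPath WEdge.tri) = _
        rw [Paths.lift_toPath]; rfl
      rw [h2]
      apply limit.hom_ext
      intro ⟨u⟩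
      have : (IA.tri A ≫ (pathCC u ≫ IA.tril A) : (IA.l A) ⟶ (IA.r A)) = pathLR u := rfl
      erw [Category.assoc, Category.assoc, limit.lift_π, limit.lift_π]
      show M.1.map (IA.tri A) ≫ M.1.map (pathCC u ≫ IA.tril A) ≫ eqToHom (acc_r L M) =
        eqToHom (acc_l L M) ≫ L.map (OA.word u)
      rw [← Category.assoc, ← Functor.map_comp, this, acc_hom]
      simp
  | letter a =>
      show M.1.map (IA.letter a) ≫ Pi.lift _ = Pi.lift _ ≫ (Afin L).map (IA.letter a)
      have h2 : (Afin L).map (IA.letter a) =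
          Pi.lift (fun u : List A => Pi.π (fun _ : List A => L.obj (OA.r A)) (a :: u)) := by
        show (Paths.lift (AfinPre L)).map (Quiver.Hom.toPath (WEdge.letter a)) = _
        rw [Paths.lift_toPath]; rfl
      rw [h2]
      apply limit.hom_ext
      intro ⟨u⟩
      have h3 : (IA.letter a ≫ (pathCC u ≫ IA.tril A) : (IA.c A) ⟶ (IA.r A)) =
          pathCC (a :: u) ≫ IA.tril A := by
        show (Quiver.Hom.toPath (WEdge.letter a)).comp ((pathCC u).comp _) = _
        show _ = ((Quiver.Hom.toPath (WEdge.letter a)).comp (pathCC u)).comp _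
        erw [Quiver.Path.comp_assoc]
      erw [Category.assoc, Category.assoc, limit.lift_π, limit.lift_π]
      show M.1.map (IA.letter a) ≫ M.1.map (pathCC u ≫ IA.tril A) ≫ eqToHom (acc_r L M) =
        Pi.lift (fun u => M.1.map (pathCC u ≫ IA.tril A) ≫ eqToHom (acc_r L M)) ≫ Pi.π _ (a :: u)
      erw [limit.lift_π, ← Category.assoc, ← CategoryTheory.Functor.map_comp, h3]
      rfl
  | tril =>
      show M.1.map (IA.tril A) ≫ eqToHom (acc_r L M) =
        Pi.lift _ ≫ (Afin L).map (IA.tril A)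
      have h2 : (Afin L).map (IA.tril A) =
          Pi.π (fun _ : List A => L.obj (OA.r A)) ([] : List A) := by
        show (Paths.lift (AfinPre L)).map (Quiver.Hom.toPath WEdge.tril) = _
        rw [Paths.lift_toPath]; rfl
      rw [h2]
      erw [limit.lift_π]
      have h3 : (pathCC ([] : List A) ≫ IA.tril A : (IA.c A) ⟶ (IA.r A)) = IA.tril A := rfl
      exact congrArg (fun f => M.1.map f ≫ eqToHom (acc_r L M)) h3.symm

/-- The canonical natural transformation to the final automaton. -/
noncomputable def toAfinNat : M.1 ⟶ Afin L where
  app X := toAfinApp L M X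
  naturality X Y p := nat_of_edges (toAfinApp L M) (toAfin_edge L M) p

theorem toAfin_whisker :
    CategoryTheory.Functor.whiskerLeft (OA.inc A) (toAfinNat L M) =
      eqToHom (M.2.trans (Afin_accepts L).symm) := by
  apply NatTrans.ext
  funext X
  rcases X with ⟨(_ | _ | _), hX⟩
  · show toAfinApp L M WObj.left = _
    erw [eqToHom_app]
    rfl
  · exact absurd rfl hX
  · show toAfinApp L M WObj.right = _
    erw [eqToHom_app]
    rfl

/-- The canonical morphism in `Auto A L`. -/
noncomputable def toAfinHom : M ⟶ Auto.mk (Afin L) (Afin_accepts L) :=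
  ⟨toAfinNat L M, toAfin_whisker L M⟩

theorem toAfin_unique (β : M ⟶ Auto.mk (Afin L) (Afin_accepts L)) :
    β = toAfinHom L M := by
  apply Subtype.ext
  apply NatTrans.ext
  funext X
  have hl : β.1.app (IA.l A) = eqToHom (acc_l L M) := by
    have := congrArg (fun γ => NatTrans.app γ (OA.l A)) β.2
    simp only [eqToHom_app] at this
    exact this.trans (by rfl)
  have hr : β.1.app (IA.r A) = eqToHom (acc_r L M) := by
    have := congrArg (fun γ => NatTrans.app γ (OA.r A)) β.2
    simp only [eqToHom_app] at this
    exact this.trans (by rfl)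
  show β.1.app X = toAfinApp L M X
  match X with
  | WObj.left => exact hl
  | WObj.right => exact hr
  | WObj.center =>
      apply limit.hom_ext
      intro ⟨u⟩
      have hnat : M.1.map (pathCC u ≫ IA.tril A) ≫ β.1.app (IA.r A) =
          β.1.app (IA.c A) ≫ (Afin L).map (pathCC u ≫ IA.tril A) :=
        β.1.naturality (pathCC u ≫ IA.tril A)
      rw [Afin_map_pathCC_tril, hr] at hnat
      show β.1.app (IA.c A) ≫ Pi.π (fun _ : List A => L.obj (OA.r A)) u = _
      erw [← hnat]
      show M.1.map (pathCC u ≫ IA.tril A) ≫ eqToHom (acc_r L M) =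
        toAfinApp L M WObj.center ≫ Pi.π (fun _ : List A => L.obj (OA.r A)) u
      show _ = Pi.lift (fun u : List A =>
        M.1.map (pathCC u ≫ IA.tril A) ≫ eqToHom (acc_r L M)) ≫ Pi.π _ u
      simp

end Terminal

/-- `𝒜_fin` accepts `L` and is a final object of `Auto(L)`. -/
theorem Afin_accepts_and_final [HasLimitsOfShape (Discrete (List A)) C]
    (L : OA A ⥤ C) :
    ∃ h : Accepts (Afin L) L, Nonempty (IsTerminal (Auto.mk (Afin L) h)) := by
  refine ⟨Afin_accepts L, ⟨IsTerminal.ofUniqueHom (fun M => toAfinHom L M)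
    (fun M β => toAfin_unique L M β)⟩⟩
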